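/- arXiv:0905.0833 — 3 statements merged into one kernel-verified Lean document; each statement's English description precedes it below -/
import Mathlib

section
/- Let H be a group with trivial center, and let Q be a group. Suppose Γ₁ and Γ₂ are groups containing H as a normal subgroup, equipped with isomorphisms φᵢ: Γᵢ/H ≅ Q (i = 1, 2), and suppose the induced homomorphisms Q → Out(H) given by the conjugation actions coincide. Then there exists an isomorphism θ: Γ₁ ≅ Γ₂ that restricts to the identity on H and induces the identity on Q (i.e., φ₂ ∘ θ̄ = φ₁, where θ̄ is the map induced by θ on the quotients by H). -/
section Aux

variable {H Γ : Type} [Group H] [Group Γ]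

/-- Conjugation action of `Γ` on `H` through an injective hom with normal range. -/
noncomputable def conjHomAux (i : H →* Γ) (hi : Function.Injective i) [i.range.Normal] :
    Γ →* MulAut H :=
  (MulAut.congr (MonoidHom.ofInjective hi).symm).toMonoidHom.comp MulAut.conjNormal

lemma conjHomAux_spec (i : H →* Γ) (hi : Function.Injective i) [i.range.Normal]
    (γ : Γ) (h : H) : i (conjHomAux i hi γ h) = γ * i h * γ⁻¹ := by
  show i ((MonoidHom.ofInjective hi).symm
      (MulAut.conjNormal γ (MonoidHom.ofInjective hi h))) = _
  rw [MonoidHom.apply_ofInjective_symm hi]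
  rw [MulAut.conjNormal_apply]
  congr 1

lemma conjHomAux_eq (i : H →* Γ) (hi : Function.Injective i) [i.range.Normal]
    (γ : Γ) (h k : H) (hk : γ * i h * γ⁻¹ = i k) : conjHomAux i hi γ h = k := by
  apply hi
  rw [conjHomAux_spec, hk]

end Aux

/-- Extensions of `Q` by a centerless group `H` are classified by their
induced map `Q → Out(H)`: if two extensions `1 → H → Γᵢ → Q → 1` (i = 1,2)
induce the same conjugation action up to inner automorphisms, then there is
an isomorphism `Γ₁ ≅ Γ₂` restricting to the identity on `H` and inducing the
identity on `Q`. -/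
theorem extension_isomorphic_of_centerless_kernel_same_outer_action
    (H Q Γ₁ Γ₂ : Type) [Group H] [Group Q] [Group Γ₁] [Group Γ₂]
    (hH : Subgroup.center H = ⊥)
    (i₁ : H →* Γ₁) (i₂ : H →* Γ₂)
    (hi₁ : Function.Injective i₁) (hi₂ : Function.Injective i₂)
    [i₁.range.Normal] [i₂.range.Normal]
    (φ₁ : Γ₁ ⧸ i₁.range ≃* Q) (φ₂ : Γ₂ ⧸ i₂.range ≃* Q)
    -- the two induced homomorphisms `Q → Out(H)` coincide: whenever `γ₁` and `γ₂`
    -- map to the same element of `Q`, their conjugation actions on `H` differ by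
    -- an inner automorphism of `H`
    (hsame : ∀ (γ₁ : Γ₁) (γ₂ : Γ₂),
      φ₁ (QuotientGroup.mk γ₁) = φ₂ (QuotientGroup.mk γ₂) →
      ∃ h₀ : H, ∀ h k : H, γ₁ * i₁ h * γ₁⁻¹ = i₁ k →
        γ₂ * i₂ h * γ₂⁻¹ = i₂ (h₀ * k * h₀⁻¹)) :
    ∃ θ : Γ₁ ≃* Γ₂,
      (∀ h : H, θ (i₁ h) = i₂ h) ∧
      (∀ γ : Γ₁, φ₂ (QuotientGroup.mk (θ γ)) = φ₁ (QuotientGroup.mk γ)) := by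
  classical
  set c₁ : Γ₁ →* MulAut H := conjHomAux i₁ hi₁ with hc₁
  set c₂ : Γ₂ →* MulAut H := conjHomAux i₂ hi₂ with hc₂
  set p₁ : Γ₁ →* Q := φ₁.toMonoidHom.comp (QuotientGroup.mk' i₁.range) with hp₁
  set p₂ : Γ₂ →* Q := φ₂.toMonoidHom.comp (QuotientGroup.mk' i₂.range) with hp₂
  set Φ₁ : Γ₁ →* MulAut H × Q := c₁.prod p₁ with hΦ₁
  set Φ₂ : Γ₂ →* MulAut H × Q := c₂.prod p₂ with hΦ₂
  -- injectivity of Φ₁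
  have inj₁ : Function.Injective Φ₁ := by
    rw [← MonoidHom.ker_eq_bot_iff, eq_bot_iff]
    intro γ hγ
    have h1 : c₁ γ = 1 := congrArg Prod.fst hγ
    have h2 : p₁ γ = 1 := congrArg Prod.snd hγ
    have hmem : γ ∈ i₁.range := by
      have : QuotientGroup.mk' i₁.range γ = 1 := by
        have := φ₁.injective (a₁ := QuotientGroup.mk' i₁.range γ) (a₂ := 1)
        simp only [map_one] at this
        exact this h2
      rwa [← QuotientGroup.ker_mk' i₁.range, MonoidHom.mem_ker]
    obtain ⟨h, rfl⟩ := hmem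
    have hcen : h ∈ Subgroup.center H := by
      rw [Subgroup.mem_center_iff]
      intro g
      have : c₁ (i₁ h) g = g := by rw [h1]; rfl
      have := conjHomAux_eq i₁ hi₁ (i₁ h) g (h * g * h⁻¹)
        (by rw [← map_mul, ← map_inv, ← map_mul]) ▸ this
      have heq : h * g * h⁻¹ = g := this
      conv_lhs => rw [← heq]
      group
    rw [hH, Subgroup.mem_bot] at hcen
    simp [hcen]
  have inj₂ : Function.Injective Φ₂ := by
    rw [← MonoidHom.ker_eq_bot_iff, eq_bot_iff]
    intro γ hγ
    have h1 : c₂ γ = 1 := congrArg Prod.fst hγ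
    have h2 : p₂ γ = 1 := congrArg Prod.snd hγ
    have hmem : γ ∈ i₂.range := by
      have : QuotientGroup.mk' i₂.range γ = 1 := by
        have := φ₂.injective (a₁ := QuotientGroup.mk' i₂.range γ) (a₂ := 1)
        simp only [map_one] at this
        exact this h2
      rwa [← QuotientGroup.ker_mk' i₂.range, MonoidHom.mem_ker]
    obtain ⟨h, rfl⟩ := hmem
    have hcen : h ∈ Subgroup.center H := by
      rw [Subgroup.mem_center_iff]
      intro g
      have : c₂ (i₂ h) g = g := by rw [h1]; rfl
      have := conjHomAux_eq i₂ hi₂ (i₂ h) g (h * g * h⁻¹)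
        (by rw [← map_mul, ← map_inv, ← map_mul]) ▸ this
      have heq : h * g * h⁻¹ = g := this
      conv_lhs => rw [← heq]
      group
    rw [hH, Subgroup.mem_bot] at hcen
    simp [hcen]
  -- ranges agree
  have hrange : Φ₁.range = Φ₂.range := by
    apply le_antisymm
    · rintro _ ⟨γ₁, rfl⟩
      obtain ⟨x, hx⟩ := φ₂.surjective (φ₁ (QuotientGroup.mk γ₁))
      obtain ⟨γ₂, rfl⟩ := QuotientGroup.mk_surjective x
      obtain ⟨h₀, hh₀⟩ := hsame γ₁ γ₂ hx.symm
      refine ⟨i₂ h₀⁻¹ * γ₂, ?_⟩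
      have hsnd : p₂ (i₂ h₀⁻¹ * γ₂) = p₁ γ₁ := by
        simp only [hp₁, hp₂, MonoidHom.comp_apply, map_mul]
        have : QuotientGroup.mk' i₂.range (i₂ h₀⁻¹) = 1 := by
          rw [← MonoidHom.mem_ker, QuotientGroup.ker_mk' i₂.range]
          exact ⟨h₀⁻¹, rfl⟩
        rw [this, map_one, one_mul]
        exact hx
      have hfst : c₂ (i₂ h₀⁻¹ * γ₂) = c₁ γ₁ := by
        ext g
        apply conjHomAux_eq
        have hk := hh₀ g (c₁ γ₁ g) (conjHomAux_spec i₁ hi₁ γ₁ g).symm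
        rw [mul_inv_rev, ← map_inv, inv_inv]
        calc i₂ h₀⁻¹ * γ₂ * i₂ g * (γ₂⁻¹ * i₂ h₀)
            = i₂ h₀⁻¹ * (γ₂ * i₂ g * γ₂⁻¹) * i₂ h₀ := by group
          _ = i₂ h₀⁻¹ * i₂ (h₀ * c₁ γ₁ g * h₀⁻¹) * i₂ h₀ := by rw [hk]
          _ = i₂ (c₁ γ₁ g) := by
              rw [← map_mul, ← map_mul]; congr 1; group
      exact Prod.ext hfst hsnd
    · rintro _ ⟨γ₂, rfl⟩
      obtain ⟨x, hx⟩ := φ₁.surjective (φ₂ (QuotientGroup.mk γ₂))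
      obtain ⟨γ₁, rfl⟩ := QuotientGroup.mk_surjective x
      obtain ⟨h₀, hh₀⟩ := hsame γ₁ γ₂ hx
      refine ⟨i₁ h₀ * γ₁, ?_⟩
      have hsnd : p₁ (i₁ h₀ * γ₁) = p₂ γ₂ := by
        simp only [hp₁, hp₂, MonoidHom.comp_apply, map_mul]
        have : QuotientGroup.mk' i₁.range (i₁ h₀) = 1 := by
          rw [← MonoidHom.mem_ker, QuotientGroup.ker_mk' i₁.range]
          exact ⟨h₀, rfl⟩
        rw [this, map_one, one_mul]
        exact hx
      have hfst : c₁ (i₁ h₀ * γ₁) = c₂ γ₂ := by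
        ext g
        apply conjHomAux_eq
        have hk := hh₀ g (c₁ γ₁ g) (conjHomAux_spec i₁ hi₁ γ₁ g).symm
        have hc2 : c₂ γ₂ g = h₀ * c₁ γ₁ g * h₀⁻¹ := conjHomAux_eq i₂ hi₂ γ₂ g _ hk
        rw [hc2, mul_inv_rev]
        calc i₁ h₀ * γ₁ * i₁ g * (γ₁⁻¹ * (i₁ h₀)⁻¹)
            = i₁ h₀ * (γ₁ * i₁ g * γ₁⁻¹) * (i₁ h₀)⁻¹ := by group
          _ = i₁ h₀ * i₁ (c₁ γ₁ g) * (i₁ h₀)⁻¹ := by rw [conjHomAux_spec i₁ hi₁]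
          _ = i₁ (h₀ * c₁ γ₁ g * h₀⁻¹) := by rw [← map_inv, ← map_mul, ← map_mul]
      exact Prod.ext hfst hsnd
  -- build θ
  set θ : Γ₁ ≃* Γ₂ :=
    ((MonoidHom.ofInjective inj₁).trans (MulEquiv.subgroupCongr hrange)).trans
      (MonoidHom.ofInjective inj₂).symm with hθ
  have key : ∀ γ : Γ₁, Φ₂ (θ γ) = Φ₁ γ := by
    intro γ
    show Φ₂ ((MonoidHom.ofInjective inj₂).symm
      (MulEquiv.subgroupCongr hrange (MonoidHom.ofInjective inj₁ γ))) = Φ₁ γ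
    rw [MonoidHom.apply_ofInjective_symm inj₂]
    rfl
  refine ⟨θ, ?_, ?_⟩
  · intro h
    apply inj₂
    rw [key]
    have hsnd : p₁ (i₁ h) = p₂ (i₂ h) := by
      simp only [hp₁, hp₂, MonoidHom.comp_apply]
      have h1 : QuotientGroup.mk' i₁.range (i₁ h) = 1 := by
        rw [← MonoidHom.mem_ker, QuotientGroup.ker_mk' i₁.range]; exact ⟨h, rfl⟩
      have h2 : QuotientGroup.mk' i₂.range (i₂ h) = 1 := by
        rw [← MonoidHom.mem_ker, QuotientGroup.ker_mk' i₂.range]; exact ⟨h, rfl⟩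
      rw [h1, h2, map_one, map_one]
    have hfst : c₁ (i₁ h) = c₂ (i₂ h) := by
      ext g
      have e1 : c₁ (i₁ h) g = h * g * h⁻¹ :=
        conjHomAux_eq i₁ hi₁ (i₁ h) g (h * g * h⁻¹)
          (by rw [← map_mul, ← map_inv, ← map_mul])
      have e2 : c₂ (i₂ h) g = h * g * h⁻¹ :=
        conjHomAux_eq i₂ hi₂ (i₂ h) g (h * g * h⁻¹)
          (by rw [← map_mul, ← map_inv, ← map_mul])
      rw [e1, e2]
    exact Prod.ext hfst hsnd
  · intro γ
    have := congrArg Prod.snd (key γ)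
    exact this
end

section
/- The group SL(2,ℤ) is isomorphic to the amalgamated free product (ℤ/4ℤ) *_{ℤ/2ℤ} (ℤ/6ℤ), where ℤ/2ℤ is embedded in ℤ/4ℤ and in ℤ/6ℤ as the unique subgroup of order 2 of each. -/
/-- The family consisting of the cyclic groups `ℤ/4ℤ` and `ℤ/6ℤ`
(written multiplicatively), indexed by `Bool`. -/
def SL2ZAmalgam.Gfam : Bool → Type
  | true => Multiplicative (ZMod 4)
  | false => Multiplicative (ZMod 6)

instance : ∀ b, Group (SL2ZAmalgam.Gfam b)
  | true => inferInstanceAs (Group (Multiplicative (ZMod 4)))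
  | false => inferInstanceAs (Group (Multiplicative (ZMod 6)))

/-- The embeddings of `ℤ/2ℤ` into `ℤ/4ℤ` and `ℤ/6ℤ` as the unique subgroup of
order two of each: `x ↦ 2x` and `x ↦ 3x` respectively. -/
def SL2ZAmalgam.φfam : ∀ b, Multiplicative (ZMod 2) →* SL2ZAmalgam.Gfam b
  | true => show Multiplicative (ZMod 2) →* Multiplicative (ZMod 4) from
      AddMonoidHom.toMultiplicative
        (AddMonoidHom.mk' (fun x : ZMod 2 => ((2 * x.val : ℕ) : ZMod 4)) (by decide))
  | false => show Multiplicative (ZMod 2) →* Multiplicative (ZMod 6) from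
      AddMonoidHom.toMultiplicative
        (AddMonoidHom.mk' (fun x : ZMod 2 => ((3 * x.val : ℕ) : ZMod 6)) (by decide))


open Matrix
abbrev G := Matrix.SpecialLinearGroup (Fin 2) ℤ

instance : DecidableEq G := fun a b =>
  decidable_of_iff (a.1 = b.1) Subtype.ext_iff.symm

def MS : G := ModularGroup.S
def MT : G := ModularGroup.T
def MU : G := MT * MS
def ML : G := ⟨!![1,0;1,1], by norm_num [Matrix.det_fin_two_of]⟩
def MW : G := MS * MS

lemma coe_MS : MS.1 = !![0,-1;1,0] := by decide
lemma coe_MU : MU.1 = !![1,-1;1,0] := by decide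
lemma coe_MW : MW.1 = !![-1,0;0,-1] := by decide
lemma coe_MT : MT.1 = !![1,1;0,1] := by decide

lemma MW_mul (g : G) : MW * g = g * MW := by
  ext i j
  rw [Matrix.SpecialLinearGroup.coe_mul, Matrix.SpecialLinearGroup.coe_mul, coe_MW]
  fin_cases i <;> fin_cases j <;>
    simp [Matrix.mul_apply, Fin.sum_univ_succ]

lemma MW_sq : MW * MW = 1 := by decide

/-- equality up to sign -/
def eqpm (x y : G) : Prop := x = y ∨ x = MW * y

lemma eqpm_refl (x : G) : eqpm x x := Or.inl rfl

lemma eqpm_mul {x x' y y' : G} (h : eqpm x x') (h' : eqpm y y') : eqpm (x * y) (x' * y') := by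
  rcases h with rfl | rfl <;> rcases h' with rfl | rfl
  · exact Or.inl rfl
  · right; rw [← mul_assoc, ← MW_mul, mul_assoc]
  · right; rw [mul_assoc]
  · left
    have : MW * x' * (MW * y') = MW * MW * (x' * y') := by
      calc MW * x' * (MW * y') = MW * (x' * MW) * y' := by group
        _ = MW * (MW * x') * y' := by rw [← MW_mul]
        _ = MW * MW * (x' * y') := by group
    rw [this, MW_sq, one_mul]

def blkB (b : Bool) : G := if b then MT else ML

def blk (l : List Bool) : G := (l.map blkB).prod

lemma blk_cons (b : Bool) (l : List Bool) : blk (b :: l) = blkB b * blk l := by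
  simp [blk]

def Pos (m : G) : Prop := (∀ i j, 0 ≤ m.1 i j) ∧ 0 < m.1 0 1 + m.1 1 0

lemma pos_blkB (b : Bool) : Pos (blkB b) := by
  cases b <;> constructor <;>
    first
      | (intro i j; fin_cases i <;> fin_cases j <;> simp [blkB, MT, ML, ModularGroup.T] <;> norm_num)
      | (simp [blkB, MT, ML, ModularGroup.T] <;> norm_num)

lemma pos_mul {b : Bool} {m : G} (hm : Pos m) : Pos (blkB b * m) := by
  obtain ⟨hnn, hbc⟩ := hm
  have h00 := hnn 0 0; have h01 := hnn 0 1; have h10 := hnn 1 0; have h11 := hnn 1 1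
  cases b <;>
  · constructor
    · intro i j
      rw [Matrix.SpecialLinearGroup.coe_mul]
      fin_cases i <;> fin_cases j <;>
        simp [blkB, MT, ML, ModularGroup.coe_T, Matrix.mul_apply, Fin.sum_univ_succ] <;>
        linarith
    · rw [Matrix.SpecialLinearGroup.coe_mul]
      simp [blkB, MT, ML, ModularGroup.coe_T, Matrix.mul_apply, Fin.sum_univ_succ]
      linarith

lemma pos_blk {l : List Bool} (hl : l ≠ []) : Pos (blk l) := by
  induction l with
  | nil => exact absurd rfl hl
  | cons b l ih =>
    rcases eq_or_ne l [] with rfl | hne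
    · simpa [blk] using pos_blkB b
    · rw [blk_cons]
      exact pos_mul (ih hne)

def PM (m : G) : Prop := m = 1 ∨ m = MW

lemma PM_MW_mul {y : G} : PM (MW * y) ↔ PM y := by
  constructor
  · rintro (h | h)
    · right
      have : MW * (MW * y) = MW * 1 := by rw [h]
      rw [← mul_assoc, MW_sq, one_mul, mul_one] at this
      rw [this]
    · left
      have : MW * (MW * y) = MW * MW := by rw [h]
      rw [← mul_assoc, MW_sq, one_mul] at this
      exact this
  · rintro (rfl | rfl)
    · right; rw [mul_one]
    · left; exact MW_sq

lemma PM_eqpm {x y : G} (h : eqpm x y) : PM x ↔ PM y := by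
  rcases h with rfl | rfl
  · rfl
  · exact PM_MW_mul

lemma PM_inv {x : G} (h : PM x) : PM x⁻¹ := by
  rcases h with rfl | rfl
  · left; simp
  · right
    exact inv_eq_of_mul_eq_one_right MW_sq

def MUa (b : Bool) : G := if b then MU else MU * MU

def Letter : Bool → G → Prop := fun i g =>
  if i then eqpm g MS else (∃ b, eqpm g (MUa b))

instance : ∀ x y, Decidable (eqpm x y) := fun _ _ => inferInstanceAs (Decidable (_ ∨ _))

instance : ∀ i g, Decidable (Letter i g) := fun i g => by
  unfold Letter
  infer_instance

lemma MUa_MS (b : Bool) : MUa b * MS = MW * blkB b := by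
  cases b <;> decide

def Q : Bool → Bool → G → Prop
  | true, true => fun m => eqpm m MS ∨ ∃ lb, lb ≠ [] ∧ eqpm m (MS * blk lb)
  | true, false => fun m => ∃ b, eqpm m (MS * MUa b) ∨ ∃ lb, lb ≠ [] ∧ eqpm m (MS * blk lb * MUa b)
  | false, true => fun m => ∃ lb, lb ≠ [] ∧ eqpm m (blk lb)
  | false, false => fun m => ∃ b, eqpm m (MUa b) ∨ ∃ lb, lb ≠ [] ∧ eqpm m (blk lb * MUa b)

inductive Alt : Bool → Bool → List (Bool × G) → Prop
  | single {b : Bool} {g : G} : Letter b g → Alt b b [(b, g)]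
  | cons {b : Bool} {g : G} {c e : Bool} {l : List (Bool × G)} :
      Letter b g → Alt c e l → b ≠ c → Alt b e ((b, g) :: l)

lemma eqpm_trans_eq {x y z : G} (h : eqpm x y) (h2 : y = z) : eqpm x z := h2 ▸ h

lemma MW_mul_MW_mul (y : G) : MW * (MW * y) = y := by
  rw [← mul_assoc, MW_sq, one_mul]

lemma eqpm_MW_iff {x y : G} : eqpm x (MW * y) ↔ eqpm x y := by
  unfold eqpm
  rw [MW_mul_MW_mul]
  exact or_comm

lemma blk_singleton (b : Bool) : blk [b] = blkB b := by simp [blk]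

lemma altQ {i e : Bool} {l : List (Bool × G)} (h : Alt i e l) :
    Q i e ((l.map Prod.snd).prod) := by
  induction h with
  | @single b g hg =>
    cases b
    · obtain ⟨b', hb'⟩ := hg
      exact ⟨b', Or.inl (by simpa using hb')⟩
    · exact Or.inl (by have hg' : eqpm g MS := hg; simpa using hg')
  | @cons b g c e l hg hAlt hbc ih =>
    have hprod : ((((b, g) :: l).map Prod.snd).prod) = g * (l.map Prod.snd).prod := by
      simp
    rw [hprod]
    set rest := (l.map Prod.snd).prod with hrest
    cases b
    · -- b = false : u-type letter, c = true
      obtain ⟨a0, ha0⟩ := hg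
      cases c
      · exact absurd rfl hbc
      · cases e
        · -- Q true false rest
          obtain ⟨b', hb'⟩ := ih
          refine ⟨b', ?_⟩
          rcases hb' with h | ⟨lb, hne, h⟩
          · right
            refine ⟨[a0], by simp, ?_⟩
            have := eqpm_mul ha0 h
            rw [← mul_assoc] at this
            rw [blk_singleton]
            have h2 : MUa a0 * MS * MUa b' = MW * (blkB a0 * MUa b') := by
              rw [MUa_MS, mul_assoc]
            exact eqpm_MW_iff.1 (eqpm_trans_eq this h2)
          · right
            refine ⟨a0 :: lb, by simp, ?_⟩
            have := eqpm_mul ha0 h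
            have h2 : MUa a0 * (MS * blk lb * MUa b') = MW * (blk (a0 :: lb) * MUa b') := by
              rw [blk_cons, ← mul_assoc, ← mul_assoc, MUa_MS, mul_assoc, mul_assoc, mul_assoc]
            exact eqpm_MW_iff.1 (eqpm_trans_eq this h2)
        · -- e = true, Q true true rest
          rcases ih with h | ⟨lb, hne, h⟩
          · refine ⟨[a0], by simp, ?_⟩
            have := eqpm_mul ha0 h
            rw [blk_singleton]
            exact eqpm_MW_iff.1 (eqpm_trans_eq this (MUa_MS a0))
          · refine ⟨a0 :: lb, by simp, ?_⟩
            have := eqpm_mul ha0 h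
            have h2 : MUa a0 * (MS * blk lb) = MW * blk (a0 :: lb) := by
              rw [blk_cons, ← mul_assoc, MUa_MS, mul_assoc]
            exact eqpm_MW_iff.1 (eqpm_trans_eq this h2)
    · -- b = true : s-type letter, c = false
      cases c
      · cases e
        · -- Q false false rest
          obtain ⟨b', hb'⟩ := ih
          refine ⟨b', ?_⟩
          rcases hb' with h | ⟨lb, hne, h⟩
          · exact Or.inl (eqpm_mul hg h)
          · exact Or.inr ⟨lb, hne, eqpm_trans_eq (eqpm_mul hg h) (by rw [mul_assoc])⟩
        · -- Q false true rest
          obtain ⟨lb, hne, h⟩ := ih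
          exact Or.inr ⟨lb, hne, eqpm_mul hg h⟩
      · exact absurd rfl hbc

lemma coe_MU2 : (MU * MU).1 = !![0,-1;1,-1] := by decide
lemma coe_one : (1 : G).1 = !![1,0;0,1] := by decide

section notPM
variable {p : G} (hp : Pos p)

lemma entries_of_eq {x y : G} (h : x = y) : ∀ i j, x.1 i j = y.1 i j := by
  intro i j; rw [h]

lemma notPM_blk (hp : Pos p) : ¬ PM p := by
  obtain ⟨hnn, hbc⟩ := hp
  rintro (h | h) <;>
  · have h01 := entries_of_eq h 0 1
    have h10 := entries_of_eq h 1 0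
    simp [coe_one, coe_MW] at h01 h10
    omega

lemma notPM_MS_mul (hp : Pos p) : ¬ PM (MS * p) := by
  obtain ⟨hnn, hbc⟩ := hp
  have h00 := hnn 0 0; have h01 := hnn 0 1; have h10 := hnn 1 0; have h11 := hnn 1 1
  rintro (h | h)
  · have e := entries_of_eq h 0 0
    simp [Matrix.SpecialLinearGroup.coe_mul, coe_MS, coe_one, Matrix.mul_apply, Matrix.vecMul, dotProduct,
      Fin.sum_univ_succ] at e
    linarith
  · have e := entries_of_eq h 1 1
    simp [Matrix.SpecialLinearGroup.coe_mul, coe_MS, coe_MW, Matrix.mul_apply, Matrix.vecMul, dotProduct,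
      Fin.sum_univ_succ] at e
    linarith

lemma notPM_mul_MUa (hp : Pos p) (b : Bool) : ¬ PM (p * MUa b) := by
  obtain ⟨hnn, hbc⟩ := hp
  have h00 := hnn 0 0; have h01 := hnn 0 1; have h10 := hnn 1 0; have h11 := hnn 1 1
  cases b <;> rintro (h | h)
  · -- MU², = 1
    have e1 := entries_of_eq h 0 0
    have e2 := entries_of_eq h 0 1
    simp [MUa, Matrix.SpecialLinearGroup.coe_mul, coe_MU, coe_MU2, coe_one, Matrix.mul_apply, Matrix.vecMul, dotProduct,
      Fin.sum_univ_succ] at e1 e2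
    linarith
  · have e := entries_of_eq h 0 0
    simp [MUa, Matrix.SpecialLinearGroup.coe_mul, coe_MU, coe_MU2, coe_MW, Matrix.mul_apply, Matrix.vecMul, dotProduct,
      Fin.sum_univ_succ] at e
    linarith
  · -- MU, = 1
    have e := entries_of_eq h 1 1
    simp [MUa, Matrix.SpecialLinearGroup.coe_mul, coe_MU, coe_one, Matrix.mul_apply, Matrix.vecMul, dotProduct,
      Fin.sum_univ_succ] at e
    linarith
  · have e := entries_of_eq h 0 0
    simp [MUa, Matrix.SpecialLinearGroup.coe_mul, coe_MU, coe_MW, Matrix.mul_apply, Matrix.vecMul, dotProduct,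
      Fin.sum_univ_succ] at e
    linarith

lemma notPM_MS_mul_MUa (hp : Pos p) (b : Bool) : ¬ PM (MS * p * MUa b) := by
  obtain ⟨hnn, hbc⟩ := hp
  have h00 := hnn 0 0; have h01 := hnn 0 1; have h10 := hnn 1 0; have h11 := hnn 1 1
  cases b <;> rintro (h | h)
  · -- MU², = 1 : entry 0 0 : -p11 = 1
    have e := entries_of_eq h 0 0
    simp [MUa, Matrix.SpecialLinearGroup.coe_mul, coe_MS, coe_MU, coe_MU2, coe_one, Matrix.mul_apply, Matrix.vecMul, dotProduct, Matrix.vecHead, Matrix.vecTail,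
      Fin.sum_univ_succ] at e
    linarith
  · have e1 := entries_of_eq h 0 0
    have e2 := entries_of_eq h 0 1
    simp [MUa, Matrix.SpecialLinearGroup.coe_mul, coe_MS, coe_MU, coe_MU2, coe_MW, Matrix.mul_apply, Matrix.vecMul, dotProduct, Matrix.vecHead, Matrix.vecTail,
      Fin.sum_univ_succ] at e1 e2
    linarith
  · -- MU, = 1
    have e := entries_of_eq h 0 0
    simp [MUa, Matrix.SpecialLinearGroup.coe_mul, coe_MS, coe_MU, coe_one, Matrix.mul_apply, Matrix.vecMul, dotProduct, Matrix.vecHead, Matrix.vecTail,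
      Fin.sum_univ_succ] at e
    linarith
  · have e1 := entries_of_eq h 1 1
    have e2 := entries_of_eq h 1 0
    simp [MUa, Matrix.SpecialLinearGroup.coe_mul, coe_MS, coe_MU, coe_MW, Matrix.mul_apply, Matrix.vecMul, dotProduct, Matrix.vecHead, Matrix.vecTail,
      Fin.sum_univ_succ] at e1 e2
    linarith

end notPM

instance : DecidablePred PM := fun m => inferInstanceAs (Decidable (_ ∨ _))

lemma notPM_base : ¬ PM MS ∧ (∀ b, ¬ PM (MUa b)) ∧ (∀ b, ¬ PM (MS * MUa b)) := by
  refine ⟨by decide, by decide, by decide⟩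

lemma noPM {i e : Bool} {m : G} (h : Q i e m) : ¬ PM m := by
  intro hPM
  cases i <;> cases e
  · obtain ⟨b, h⟩ := h
    rcases h with h | ⟨lb, hne, h⟩
    · exact notPM_base.2.1 b ((PM_eqpm h).1 hPM)
    · exact notPM_mul_MUa (pos_blk hne) b ((PM_eqpm h).1 hPM)
  · obtain ⟨lb, hne, h⟩ := h
    exact notPM_blk (pos_blk hne) ((PM_eqpm h).1 hPM)
  · obtain ⟨b, h⟩ := h
    rcases h with h | ⟨lb, hne, h⟩
    · exact notPM_base.2.2 b ((PM_eqpm h).1 hPM)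
    · exact notPM_MS_mul_MUa (pos_blk hne) b ((PM_eqpm h).1 hPM)
  · rcases h with h | ⟨lb, hne, h⟩
    · exact notPM_base.1 ((PM_eqpm h).1 hPM)
    · exact notPM_MS_mul (pos_blk hne) ((PM_eqpm h).1 hPM)

lemma toAlt : ∀ (l : List (Bool × G)) (p : Bool × G), Letter p.1 p.2 →
    (∀ q ∈ l, Letter q.1 q.2) → List.Chain' (fun p q => p.1 ≠ q.1) (p :: l) →
    ∃ e, Alt p.1 e (p :: l) := by
  intro l
  induction l with
  | nil => exact fun p hp _ _ => ⟨p.1, Alt.single hp⟩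
  | cons q l ih =>
    intro p hp hq hchain
    obtain ⟨e, hAlt⟩ := ih q (hq q (by simp)) (fun r hr => hq r (by simp [hr]))
      (List.IsChain.tail hchain)
    exact ⟨e, Alt.cons hp hAlt (List.isChain_cons_cons.1 hchain).1⟩

lemma main_word {l : List (Bool × G)} (hne : l ≠ [])
    (hlet : ∀ q ∈ l, Letter q.1 q.2)
    (hchain : List.Chain' (fun p q => p.1 ≠ q.1) l) :
    ¬ PM ((l.map Prod.snd).prod) := by
  match l, hne with
  | p :: l, _ =>
    obtain ⟨e, hAlt⟩ := toAlt l p (hlet p (by simp)) (fun q hq => hlet q (by simp [hq])) hchain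
    exact noPM (altQ hAlt)

lemma entry_rel (A : G) : A.1 0 0 * A.1 1 1 - A.1 0 1 * A.1 1 0 = 1 := by
  have := A.2
  rwa [Matrix.det_fin_two] at this

lemma generation (K : Subgroup G) (hS : ModularGroup.S ∈ K) (hT : ModularGroup.T ∈ K) :
    ∀ A : G, A ∈ K := by
  have key : ∀ n : ℕ, ∀ A : G, (A.1 1 0).natAbs = n → A ∈ K := by
    intro n
    induction n using Nat.strong_induction_on with
    | _ n ih =>
    intro A hn
    rcases eq_or_ne (A.1 1 0) 0 with h0 | h0
    · -- c = 0
      have hdet := entry_rel A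
      rw [h0, mul_zero, sub_zero] at hdet
      rcases Int.mul_eq_one_iff_eq_one_or_neg_one.1 hdet with ⟨h1, h2⟩ | ⟨h1, h2⟩
      · have : A = ModularGroup.T ^ (A.1 0 1) := by
          ext i j
          fin_cases i <;> fin_cases j <;>
            simp [ModularGroup.coe_T_zpow, h1, h2, h0]
        rw [this]; exact zpow_mem hT _
      · have hS2 : (ModularGroup.S * ModularGroup.S : G).1 = !![-1,0;0,-1] := by decide
        have : A = ModularGroup.S * ModularGroup.S * ModularGroup.T ^ (-(A.1 0 1)) := by
          ext i j
          rw [Matrix.SpecialLinearGroup.coe_mul, hS2, ModularGroup.coe_T_zpow]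
          fin_cases i <;> fin_cases j <;>
            simp [Matrix.mul_apply, Fin.sum_univ_succ, h1, h2, h0]
        rw [this]
        exact mul_mem (mul_mem hS hS) (zpow_mem hT _)
    · -- c ≠ 0
      set a := A.1 0 0 with ha
      set c := A.1 1 0 with hc
      set q := a / c with hq
      have hB : ModularGroup.S * ModularGroup.T ^ (-q) * A ∈ K → A ∈ K := by
        intro h
        have : A = (ModularGroup.T ^ (-q))⁻¹ * ModularGroup.S⁻¹ *
            (ModularGroup.S * ModularGroup.T ^ (-q) * A) := by group
        rw [this]
        exact mul_mem (mul_mem (inv_mem (zpow_mem hT _)) (inv_mem hS)) h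
      apply hB
      apply ih ((ModularGroup.S * ModularGroup.T ^ (-q) * A).1 1 0).natAbs ?_ _ rfl
      have hentry : ((ModularGroup.S * ModularGroup.T ^ (-q) * A)).1 1 0 = a % c := by
        rw [Matrix.SpecialLinearGroup.coe_mul, Matrix.SpecialLinearGroup.coe_mul, ModularGroup.coe_T_zpow]
        simp [Matrix.SpecialLinearGroup.coe_mul, ModularGroup.coe_T_zpow, ModularGroup.S,
          Matrix.mul_apply, Fin.sum_univ_succ]
        rw [Int.emod_def]
        ring
      rw [hentry, ← hn]
      have h1 : 0 ≤ a % c := Int.emod_nonneg a h0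
      have h2 : a % c < |c| := Int.emod_lt_abs a h0
      calc (a % c).natAbs < |c|.natAbs := Int.natAbs_lt_natAbs_of_nonneg_of_lt h1 h2
        _ = c.natAbs := by rw [Int.natAbs_abs]
  exact fun A => key _ A rfl


namespace SL2ZAmalgam

instance : ∀ b, DecidableEq (Gfam b)
  | true => inferInstanceAs (DecidableEq (Multiplicative (ZMod 4)))
  | false => inferInstanceAs (DecidableEq (Multiplicative (ZMod 6)))

instance : ∀ b, Fintype (Gfam b)
  | true => inferInstanceAs (Fintype (Multiplicative (ZMod 4)))
  | false => inferInstanceAs (Fintype (Multiplicative (ZMod 6)))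

def zmodHom {n : ℕ} [NeZero n] {M : Type*} [Group M] (g : M) (hg : g ^ n = 1) :
    Multiplicative (ZMod n) →* M where
  toFun x := g ^ (Multiplicative.toAdd x).val
  map_one' := by simp [ZMod.val_zero]
  map_mul' x y := by
    rw [← pow_add]
    have h1 : (Multiplicative.toAdd (x * y)).val ≡
        (Multiplicative.toAdd x).val + (Multiplicative.toAdd y).val [MOD n] := by
      show (Multiplicative.toAdd x + Multiplicative.toAdd y).val ≡ _ [MOD n]
      rw [ZMod.val_add]
      exact Nat.mod_modEq _ n
    exact pow_eq_pow_iff_modEq.2 (h1.of_dvd (orderOf_dvd_of_pow_eq_one hg))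

lemma MS4 : MS ^ 4 = 1 := by decide
lemma MU6 : MU ^ 6 = 1 := by decide
lemma MW2 : MW ^ 2 = 1 := by decide

def fS : Multiplicative (ZMod 4) →* G := zmodHom MS MS4
def fU : Multiplicative (ZMod 6) →* G := zmodHom MU MU6
def fW : Multiplicative (ZMod 2) →* G := zmodHom MW MW2

def ffam : ∀ b, Gfam b →* G
  | true => fS
  | false => fU

lemma compat : ∀ b, (ffam b).comp (φfam b) = fW := by
  intro b
  cases b <;> exact MonoidHom.ext (by decide)

noncomputable def π : Monoid.PushoutI φfam →* G := Monoid.PushoutI.lift ffam fW compat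

lemma π_surj : Function.Surjective π := by
  intro A
  have hrange : ∀ B : G, B ∈ π.range := by
    apply generation
    · show ModularGroup.S ∈ _
      refine ⟨Monoid.PushoutI.of (φ := φfam) true (Multiplicative.ofAdd (1 : ZMod 4)), ?_⟩
      show π _ = MS
      refine (Monoid.PushoutI.lift_of ffam fW compat _).trans ?_
      show MS ^ (1 : ZMod 4).val = MS
      decide
    · have hMU : MU ∈ π.range := by
        refine ⟨Monoid.PushoutI.of (φ := φfam) false (Multiplicative.ofAdd (1 : ZMod 6)), ?_⟩
        refine (Monoid.PushoutI.lift_of ffam fW compat _).trans ?_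
        show MU ^ (1 : ZMod 6).val = MU
        decide
      have hMS : MS ∈ π.range := by
        refine ⟨Monoid.PushoutI.of (φ := φfam) true (Multiplicative.ofAdd (1 : ZMod 4)), ?_⟩
        refine (Monoid.PushoutI.lift_of ffam fW compat _).trans ?_
        show MS ^ (1 : ZMod 4).val = MS
        decide
      have : ModularGroup.T = MU * MS⁻¹ := by decide
      rw [this]
      exact mul_mem hMU (inv_mem hMS)
  obtain ⟨g, hg⟩ := hrange A
  exact ⟨g, hg⟩

end SL2ZAmalgam

namespace SL2ZAmalgam

open Monoid Monoid.PushoutI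

lemma hinj : ∀ b, Function.Injective (φfam b) := by
  intro b
  cases b <;> exact fun x y h => by revert h; revert x y; decide

lemma letter_of_not_range : ∀ (b : Bool) (g : Gfam b),
    (¬ ∃ y, φfam b y = g) → Letter b (ffam b g) := by
  intro b
  cases b <;> exact fun g h => by revert h; revert g; decide

lemma not_range {b : Bool} {d : Monoid.PushoutI.NormalWord.Transversal φfam} {g : Gfam b}
    (hg : g ∈ d.set b) (hne : g ≠ 1) : ¬ ∃ y, φfam b y = g := by
  rintro ⟨y, rfl⟩
  have hc := d.compl b
  have h1 : ((⟨⟨φfam b y, ⟨y, rfl⟩⟩, ⟨1, d.one_mem b⟩⟩ :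
      ((φfam b).range : Set (Gfam b)) × (d.set b)) : _ × _) =
      ⟨⟨1, Subgroup.one_mem _⟩, ⟨φfam b y, hg⟩⟩ := by
    apply hc.1
    show φfam b y * 1 = 1 * φfam b y
    rw [mul_one, one_mul]
  have := congrArg (fun p => (p.2 : Gfam b)) h1
  exact hne this.symm

lemma PM_fW : ∀ h, PM (fW h) := by decide

lemma fW_eq_one : ∀ h, fW h = 1 → h = 1 := by decide

lemma π_inj : Function.Injective π := by
  classical
  rw [injective_iff_map_eq_one]
  intro g hg
  obtain ⟨d⟩ := Monoid.PushoutI.NormalWord.transversal_nonempty φfam hinj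
  set w := Monoid.PushoutI.NormalWord.equiv (d := d) g with hwdef
  have hw : w.prod = g := (Monoid.PushoutI.NormalWord.equiv (d := d)).symm_apply_apply g
  set L : List (Bool × G) := w.toList.map (fun p => (p.1, ffam p.1 p.2)) with hL
  have h2 : π (ofCoprodI w.toWord.prod) = (L.map Prod.snd).prod := by
    show (π.comp (ofCoprodI (φ := φfam))) w.toWord.prod = _
    rw [Monoid.CoprodI.Word.prod, map_list_prod, List.map_map, hL, List.map_map]
    refine congrArg List.prod (List.map_congr_left ?_)
    intro p _
    show π (ofCoprodI (Monoid.CoprodI.of p.snd)) = ffam p.1 p.2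
    rw [ofCoprodI_of, π, Monoid.PushoutI.lift_of]
  have h1 : π g = fW w.head * (L.map Prod.snd).prod := by
    rw [← hw]
    show π (Monoid.PushoutI.base φfam w.head * ofCoprodI w.toWord.prod) = _
    rw [_root_.map_mul, h2, π, Monoid.PushoutI.lift_base]
  by_cases hnil : w.toList = []
  · have hgw : g = Monoid.PushoutI.base φfam w.head := by
      rw [← hw]
      show Monoid.PushoutI.base φfam w.head * ofCoprodI w.toWord.prod = _
      rw [Monoid.CoprodI.Word.prod, hnil]
      simp
    rw [hgw] at hg
    have : fW w.head = 1 := by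
      have := hg
      rwa [π, Monoid.PushoutI.lift_base] at this
    rw [hgw, fW_eq_one _ this, _root_.map_one]
  · exfalso
    have hLne : L ≠ [] := by
      simpa [hL] using hnil
    have hlet : ∀ q ∈ L, Letter q.1 q.2 := by
      intro q hq
      rw [hL] at hq
      obtain ⟨p, hp, rfl⟩ := List.mem_map.1 hq
      exact letter_of_not_range p.1 p.2
        (not_range (w.normalized p.1 p.2 hp) (w.toWord.ne_one p hp))
    have hchain : List.Chain' (fun p q => p.1 ≠ q.1) L := by
      rw [hL]
      exact List.isChain_map_of_isChain (fun p : (i : Bool) × Gfam i => (p.1, ffam p.1 p.2))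
        (fun _ _ h => h) w.toWord.chain_ne
    have hPM : PM ((L.map Prod.snd).prod) := by
      rw [hg] at h1
      have hXe : (fW w.head)⁻¹ = (L.map Prod.snd).prod :=
        inv_eq_of_mul_eq_one_right h1.symm
      rw [← hXe]
      exact PM_inv (PM_fW _)
    exact main_word hLne hlet hchain hPM

end SL2ZAmalgam
/-- `SL(2,ℤ)` is isomorphic to the amalgamated free product
`(ℤ/4ℤ) *_{ℤ/2ℤ} (ℤ/6ℤ)`, where `ℤ/2ℤ` is embedded in each factor as the
unique subgroup of order two. -/
theorem sl2z_iso_amalgamated_product :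
    Nonempty (Matrix.SpecialLinearGroup (Fin 2) ℤ ≃* Monoid.PushoutI SL2ZAmalgam.φfam) := by
  exact ⟨(MulEquiv.ofBijective SL2ZAmalgam.π ⟨SL2ZAmalgam.π_inj, SL2ZAmalgam.π_surj⟩).symm⟩
end

section
/- For every g ≥ 2, the genus-g surface group Π_g has trivial center. -/
open scoped commutatorElement

namespace SurfaceAux

open FreeGroup

variable {α : Type*} [DecidableEq α]

/-- A letter-pair is "non-cancelling" in the sense of `FreeGroup.reduce`. -/
def NC (a b : α × Bool) : Prop := ¬(a.1 = b.1 ∧ a.2 = !b.2)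

theorem reduce_eq_self_of_chain' :
    ∀ {L : List (α × Bool)}, L.IsChain NC → FreeGroup.reduce L = L := by
  intro L
  induction L with
  | nil => simp
  | cons x L ih =>
    intro h
    rw [FreeGroup.reduce.cons, ih h.tail]
    cases L with
    | nil => rfl
    | cons y L' =>
      have hxy : NC x y := List.isChain_cons_cons.1 h |>.1
      simp only [NC] at hxy
      simp only [List.casesOn]
      rw [if_neg]
      exact fun ⟨h1, h2⟩ => hxy ⟨h1, by simpa using h2⟩

theorem toWord_mk_of_chain' {L : List (α × Bool)} (h : L.IsChain NC) :
    (FreeGroup.mk L).toWord = L := by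
  rw [FreeGroup.toWord_mk, reduce_eq_self_of_chain' h]

end SurfaceAux

namespace Part2
open SurfaceAux FreeGroup

variable {α : Type*} [DecidableEq α]

theorem chain'_flatten_replicate_blk {x y : α} (hxy : x ≠ y) (n : ℕ) :
    (List.flatten (List.replicate n [(x,true),(y,true),(x,false),(y,false)])).IsChain NC := by
  induction n with
  | zero => simp
  | succ n ih =>
    rw [List.replicate_succ, List.flatten_cons]
    rw [List.isChain_append]
    refine ⟨?_, ih, ?_⟩
    · simp [NC, List.isChain_cons_cons, hxy, hxy.symm]
    · intro a ha b hb
      simp at ha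
      subst ha
      cases n with
      | zero => simp at hb
      | succ n =>
        rw [List.replicate_succ, List.flatten_cons] at hb
        simp at hb
        subst hb
        simp [NC, hxy.symm]

theorem commutator_of_eq_mk {x y : α} :
    ⁅FreeGroup.of x, FreeGroup.of y⁆ = FreeGroup.mk [(x,true),(y,true),(x,false),(y,false)] := by
  have hinvx : (FreeGroup.of x)⁻¹ = FreeGroup.mk [(x, false)] := by
    rw [FreeGroup.of, FreeGroup.inv_mk]; rfl
  have hinvy : (FreeGroup.of y)⁻¹ = FreeGroup.mk [(y, false)] := by
    rw [FreeGroup.of, FreeGroup.inv_mk]; rfl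
  rw [commutatorElement_def, hinvx, hinvy, FreeGroup.of, FreeGroup.of]
  simp [FreeGroup.mul_mk]

theorem commutator_pow_ne_one {x y : α} (hxy : x ≠ y) {n : ℕ} (hn : n ≠ 0) :
    ⁅FreeGroup.of x, FreeGroup.of y⁆ ^ n ≠ 1 := by
  rw [commutator_of_eq_mk, FreeGroup.pow_mk]
  intro h
  have := congrArg FreeGroup.toWord h
  rw [toWord_mk_of_chain' (chain'_flatten_replicate_blk hxy n), FreeGroup.toWord_one] at this
  apply hn
  have hlen := congrArg List.length this
  simpa [List.length_flatten] using hlen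

theorem commutator_zpow_ne_one {x y : α} (hxy : x ≠ y) {n : ℤ} (hn : n ≠ 0) :
    ⁅FreeGroup.of x, FreeGroup.of y⁆ ^ n ≠ 1 := by
  rcases n.lt_or_lt_of_ne hn with h | h
  · intro hc
    apply commutator_pow_ne_one hxy (n := (-n).toNat) (by omega)
    have : ((-n).toNat : ℤ) = -n := by omega
    rw [← zpow_natCast, this, zpow_neg, hc, inv_one]
  · intro hc
    apply commutator_pow_ne_one hxy (n := n.toNat) (by omega)
    rw [← zpow_natCast, (by omega : (n.toNat : ℤ) = n), hc]

end Part2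

namespace Part3
open SurfaceAux FreeGroup

variable {α : Type*} [DecidableEq α]

theorem chain'_reduce : ∀ (L : List (α × Bool)), (FreeGroup.reduce L).IsChain NC := by
  intro L
  induction L with
  | nil => simp
  | cons x L ih =>
    rw [FreeGroup.reduce.cons]
    rcases h : FreeGroup.reduce L with _ | ⟨hd, tl⟩
    · simp
    · rw [h] at ih
      have hred : (List.casesOn (hd :: tl) [x] fun hd tl =>
          if x.1 = hd.1 ∧ x.2 = !hd.2 then tl else x :: hd :: tl)
          = if x.1 = hd.1 ∧ x.2 = !hd.2 then tl else x :: hd :: tl := rfl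
      rw [hred]
      by_cases hc : x.1 = hd.1 ∧ x.2 = !hd.2
      · rw [if_pos hc]
        exact ih.tail
      · rw [if_neg hc]
        exact List.isChain_cons_cons.2 ⟨hc, ih⟩

theorem chain'_toWord (z : FreeGroup α) : z.toWord.IsChain NC := by
  rw [← FreeGroup.reduce_toWord]
  exact chain'_reduce _

theorem center_eq_bot {x y : α} (hxy : x ≠ y) :
    Subgroup.center (FreeGroup α) = ⊥ := by
  rw [eq_bot_iff]
  intro z hz
  rw [Subgroup.mem_center_iff] at hz
  rw [Subgroup.mem_bot]
  by_contra hz1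
  have hw : z.toWord ≠ [] := fun h => hz1 (FreeGroup.toWord_eq_nil_iff.1 h)
  set w := z.toWord with hwdef
  set hd := w.head hw with hhd
  set lst := w.getLast hw with hlst
  set f1 : α × Bool := (hd.1, !hd.2) with hf1
  -- find a letter avoiding f1 and lst
  have hcand : ((x, true) ≠ f1 ∧ (x, true) ≠ lst) ∨ ((x, false) ≠ f1 ∧ (x, false) ≠ lst)
      ∨ ((y, true) ≠ f1 ∧ (y, true) ≠ lst) := by
    by_contra hcon
    push_neg at hcon
    obtain ⟨h1, h2, h3⟩ := hcon
    by_cases e1 : (x, true) = f1 <;> by_cases e2 : (x, false) = f1 <;>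
      by_cases e3 : (y, true) = f1 <;> simp_all [Prod.ext_iff]
  obtain ⟨p, hp1, hp2⟩ : ∃ p : α × Bool, p ≠ f1 ∧ p ≠ lst := by
    rcases hcand with h | h | h
    exacts [⟨_, h⟩, ⟨_, h⟩, ⟨_, h⟩]
  -- the conjugated word
  have hinv : (FreeGroup.mk [p])⁻¹ = FreeGroup.mk [(p.1, !p.2)] := by
    rw [FreeGroup.inv_mk]; simp [FreeGroup.invRev]
  have hcomm := hz (FreeGroup.mk [p])
  have hconj : FreeGroup.mk [p] * z * (FreeGroup.mk [p])⁻¹ = z := by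
    rw [hcomm, mul_inv_cancel_right]
  have hzmk : z = FreeGroup.mk w := (FreeGroup.mk_toWord).symm
  have hbig : FreeGroup.mk ([p] ++ (w ++ [(p.1, !p.2)])) = z := by
    rw [← FreeGroup.mul_mk, ← FreeGroup.mul_mk, ← hinv, ← hzmk, ← mul_assoc, hconj]
  have hchain : ([p] ++ (w ++ [(p.1, !p.2)])).IsChain NC := by
    rw [List.isChain_append, List.isChain_append]
    refine ⟨List.isChain_singleton _, ⟨chain'_toWord z, List.isChain_singleton _, ?_⟩, ?_⟩
    · intro a ha b hb
      rw [List.getLast?_eq_getLast hw] at ha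
      simp at ha hb
      subst ha; subst hb
      intro hcon
      exact hp2 (by rw [Prod.ext_iff]; exact ⟨hcon.1.symm, by simpa using hcon.2.symm⟩)
    · intro a ha b hb
      simp at ha
      subst ha
      rw [List.head?_append_of_ne_nil _ hw, List.head?_eq_head hw] at hb
      simp at hb
      subst hb
      intro hcon
      exact hp1 (by rw [Prod.ext_iff]; exact ⟨hcon.1, by simpa using hcon.2⟩)
  have := congrArg FreeGroup.toWord hbig
  rw [toWord_mk_of_chain' hchain, ← hwdef] at this
  have hlen := congrArg List.length this
  simp at hlen
  omega

end Part3

namespace Part4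
open Monoid PushoutI NormalWord Subgroup Function

variable {ι : Type*} [DecidableEq ι] {G : ι → Type*} [∀ i, Group (G i)]
  {H : Type*} [Group H] {φ : ∀ i, H →* G i}

/-- product of a list of letters in the pushout -/
def pprod (φ : ∀ i, H →* G i) (ll : List (Σ i, G i)) : PushoutI φ :=
  (ll.map fun l => PushoutI.of (φ := φ) l.1 l.2).prod

@[simp] theorem pprod_nil : pprod φ [] = 1 := rfl

@[simp] theorem pprod_cons (l : Σ i, G i) (ll : List (Σ i, G i)) :
    pprod φ (l :: ll) = PushoutI.of (φ := φ) l.1 l.2 * pprod φ ll := by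
  simp [pprod]

theorem pprod_append (xs ys : List (Σ i, G i)) :
    pprod φ (xs ++ ys) = pprod φ xs * pprod φ ys := by
  simp [pprod]

theorem pprod_invRev (ll : List (Σ i, G i)) :
    pprod φ (ll.reverse.map fun l => ⟨l.1, l.2⁻¹⟩) = (pprod φ ll)⁻¹ := by
  induction ll with
  | nil => simp
  | cons l ll ih =>
    rw [List.reverse_cons, List.map_append, pprod_append, ih, pprod_cons]
    simp [mul_assoc]

theorem chain'_sandwich {T : Type*} (R : T → T → Prop) (xs ys : List T) (m m' : T)
    (hxs : xs.IsChain R) (hys : ys.IsChain R) (hne : ys ≠ [])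
    (h1 : ∀ a ∈ xs.getLast?, R a m) (h2 : ∀ b ∈ ys.head?, R m b)
    (h3 : ∀ a ∈ ys.getLast?, R a m') :
    ((xs ++ [m]) ++ (ys ++ [m'])).IsChain R := by
  rw [List.isChain_append]
  refine ⟨?_, ?_, ?_⟩
  · rw [List.isChain_append]
    exact ⟨hxs, List.isChain_singleton _, by simpa using h1⟩
  · rw [List.isChain_append]
    exact ⟨hys, List.isChain_singleton _, by simpa using h3⟩
  · intro a ha b hb
    rw [List.getLast?_concat] at ha
    rw [List.head?_append_of_ne_nil _ hne] at hb
    simp at ha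
    subst ha
    exact h2 b hb

/-- The key contradiction machine: a nonempty alternating word with all letters outside
the base cannot have product `1`. -/
theorem eq_nil_of_pprod_eq_one (hφ : ∀ i, Injective (φ i))
    {ll : List (Σ i, G i)}
    (hchain : ll.IsChain fun l l' => l.1 ≠ l'.1)
    (hrange : ∀ l ∈ ll, Sigma.snd l ∉ (φ l.1).range)
    (hprod : pprod φ ll = 1) : ll = [] := by
  classical
  let w : CoprodI.Word G :=
    { toList := ll
      ne_one := fun l hl h1 => hrange l hl (h1 ▸ one_mem _)
      chain_ne := hchain }
  have hred : Reduced φ w := fun l hl => hrange l hl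
  have hprod' : ofCoprodI w.prod = pprod φ ll := by
    rw [CoprodI.Word.prod, map_list_prod, List.map_map]
    rfl
  have hmem : ofCoprodI w.prod ∈ (base φ).range := by
    rw [hprod', hprod]; exact one_mem _
  have := hred.eq_empty_of_mem_range hφ hmem
  have := congrArg CoprodI.Word.toList this
  simpa [CoprodI.Word.empty] using this

theorem center_eq_bot
    (hφ : ∀ i, Injective (φ i))
    (hcen : ∀ i, Subgroup.center (G i) = ⊥)
    (hprop : ∀ (i : ι) (u : G i), ∃ c, c ∉ (φ i).range ∧ u * c * u⁻¹ ∉ (φ i).range)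
    (hother : ∀ i : ι, ∃ j, j ≠ i) [Nonempty ι] :
    Subgroup.center (PushoutI φ) = ⊥ := by
  classical
  rw [eq_bot_iff]
  intro z hz
  rw [Subgroup.mem_center_iff] at hz
  rw [Subgroup.mem_bot]
  obtain ⟨d⟩ := transversal_nonempty φ hφ
  set W : NormalWord d := z • NormalWord.empty with hW
  have hWprod : W.prod = z := by
    rw [hW, NormalWord.prod_smul, NormalWord.prod_empty, mul_one]
  -- commutator of z with anything is 1
  have hcomm1 : ∀ x : PushoutI φ, z * x * z⁻¹ * x⁻¹ = 1 := by
    intro x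
    rw [← hz]
    group
  -- letters of W are not in the base
  have hletters : ∀ l ∈ W.toList, Sigma.snd l ∉ (φ l.1).range := by
    intro l hl hr
    have hset : l.2 ∈ d.set l.1 := W.normalized l.1 l.2 (by simpa using hl)
    have hne1 : l.2 ≠ 1 := W.toWord.ne_one l hl
    have := (d.compl l.1).1
      (a₁ := (⟨l.2, hr⟩, ⟨1, d.one_mem l.1⟩))
      (a₂ := (⟨1, (φ l.1).range.one_mem⟩, ⟨l.2, hset⟩)) (by simp)
    have h2 : l.2 = 1 ∧ 1 = l.2 := by simpa [Prod.ext_iff, Subtype.ext_iff] using this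
    exact hne1 h2.1
  rcases hL : W.toList with _ | ⟨l₁, L'⟩
  -- case: empty word, z is in the base group
  · have hzbase : z = base φ W.head := by
      rw [← hWprod, NormalWord.prod]
      have : W.toWord.prod = 1 := by
        rw [CoprodI.Word.prod]
        have : W.toWord.toList = W.toList := rfl
        rw [this, hL]
        simp
      rw [this, map_one, mul_one]
    obtain ⟨i⟩ := ‹Nonempty ι›
    have hcent : φ i W.head ∈ Subgroup.center (G i) := by
      rw [Subgroup.mem_center_iff]
      intro x
      apply PushoutI.of_injective hφ i
      rw [map_mul, map_mul, of_apply_eq_base, ← hzbase]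
      exact hz (PushoutI.of (φ := φ) i x)
    rw [hcen i, Subgroup.mem_bot] at hcent
    have : W.head = 1 := hφ i (by simpa using hcent)
    rw [hzbase, this, map_one]
  · -- nonempty word: absorb the head of the base into the first letter
    set a₁ : G l₁.1 := φ l₁.1 W.head * l₁.2 with ha₁def
    set M : List (Σ i, G i) := ⟨l₁.1, a₁⟩ :: L' with hM
    have hl₁mem : l₁ ∈ W.toList := by rw [hL]; simp
    have ha₁ : a₁ ∉ (φ l₁.1).range := by
      intro hr
      apply hletters l₁ hl₁mem
      have : l₁.2 = (φ l₁.1 W.head)⁻¹ * a₁ := by rw [ha₁def]; group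
      rw [this]
      exact mul_mem (inv_mem ⟨W.head, rfl⟩) hr
    have hzM : pprod φ M = z := by
      rw [← hWprod, NormalWord.prod]
      have h1 : W.toWord.prod = (W.toList.map fun l => CoprodI.of l.2).prod := rfl
      rw [h1, hL]
      simp only [List.map_cons, List.prod_cons, map_mul]
      rw [hM, pprod_cons]
      have h2 := ofCoprodI_of (φ := φ) l₁.1 l₁.2
      have h3 : ofCoprodI ((L'.map fun l => CoprodI.of (i := l.1) l.2).prod) = pprod φ L' := by
        rw [map_list_prod, List.map_map]; rfl
      rw [h2, h3, ha₁def, map_mul, of_apply_eq_base]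
      rw [← mul_assoc]
    have hMchain : M.IsChain fun l l' => l.1 ≠ l'.1 := by
      have := W.toWord.chain_ne
      rw [show W.toWord.toList = W.toList from rfl, hL] at this
      rw [hM, List.isChain_cons]
      rw [List.isChain_cons] at this
      exact this
    have hMletters : ∀ l ∈ M, Sigma.snd l ∉ (φ l.1).range := by
      intro l hl
      rw [hM, List.mem_cons] at hl
      rcases hl with rfl | hl
      · exact ha₁
      · exact hletters l (by rw [hL]; exact List.mem_cons_of_mem _ hl)
    have hMne : M ≠ [] := by simp [hM]
    have hMinvletters : ∀ (N : List (Σ i, G i)), (∀ l ∈ N, Sigma.snd l ∉ (φ l.1).range) →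
        ∀ l ∈ (N.reverse.map fun l => (⟨l.1, l.2⁻¹⟩ : Σ i, G i)), Sigma.snd l ∉ (φ l.1).range := by
      intro N hN l hl
      simp only [List.mem_map, List.mem_reverse] at hl
      obtain ⟨m, hm, rfl⟩ := hl
      exact fun hr => hN m hm ((Subgroup.inv_mem_iff _).1 hr)
    have hMinvchain : ∀ (N : List (Σ i, G i)), (N.IsChain fun l l' => l.1 ≠ l'.1) →
        ((N.reverse.map fun l => (⟨l.1, l.2⁻¹⟩ : Σ i, G i)).IsChain fun l l' => l.1 ≠ l'.1) := by
      intro N hN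
      rw [List.isChain_map, List.isChain_reverse]
      exact hN.imp fun a b h => h.symm
    rcases hL' : L' with _ | ⟨l₂, L''⟩
    -- single letter: z = of l₁.1 a₁
    · have hzsingle : z = PushoutI.of (φ := φ) l₁.1 a₁ := by
        rw [← hzM, hM, hL']
        simp
      obtain ⟨j, hj⟩ := hother l₁.1
      obtain ⟨c, hc, -⟩ := hprop j 1
      have hbig := eq_nil_of_pprod_eq_one hφ
        (ll := [⟨l₁.1, a₁⟩, ⟨j, c⟩, ⟨l₁.1, a₁⁻¹⟩, ⟨j, c⁻¹⟩]) ?_ ?_ ?_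
      · simp at hbig
      · have hij : l₁.1 ≠ j := Ne.symm hj
        simp [List.isChain_cons_cons, hj, hij]
      · intro l hl
        simp only [List.mem_cons, List.not_mem_nil, or_false] at hl
        rcases hl with rfl | rfl | rfl | rfl
        · exact ha₁
        · exact hc
        · exact fun hr => ha₁ ((Subgroup.inv_mem_iff _).1 hr)
        · exact fun hr => hc ((Subgroup.inv_mem_iff _).1 hr)
      · simp only [pprod_cons, pprod_nil, mul_one, map_inv, ← hzsingle]
        have h := hcomm1 (PushoutI.of (φ := φ) j c)
        rw [← h]
        group
    -- at least two letters
    · have hMne2 : M ≠ [] := hMne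
      set lN := M.getLast hMne2 with hlN
      set M' := M.dropLast with hM'
      have hMsplit : M' ++ [lN] = M := List.dropLast_append_getLast hMne2
      have hM'eq : M' = ⟨l₁.1, a₁⟩ :: (l₂ :: L'').dropLast := by
        rw [hM', hM, hL']
        rfl
      have hM'ne : M' ≠ [] := by rw [hM'eq]; simp
      have hM'head : M'.head? = some ⟨l₁.1, a₁⟩ := by rw [hM'eq]; rfl
      -- split the chain condition
      have hchain2 : (M'.IsChain fun l l' => l.1 ≠ l'.1) ∧
          ∀ a ∈ M'.getLast?, a.1 ≠ lN.1 := by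
        have := hMchain
        rw [← hMsplit, List.isChain_append] at this
        exact ⟨this.1, fun a ha => by
          have := this.2.2 a ha lN (by simp)
          exact this⟩
      have hM'letters : ∀ l ∈ M', Sigma.snd l ∉ (φ l.1).range := fun l hl =>
        hMletters l ((List.dropLast_sublist M).subset hl)
      have hlNletter : lN.2 ∉ (φ lN.1).range :=
        hMletters lN (by rw [← hMsplit]; simp)
      have hzsplit : z = pprod φ M' * PushoutI.of (φ := φ) lN.1 lN.2 := by
        rw [← hzM, ← hMsplit, pprod_append]
        simp
      by_cases hii : l₁.1 = lN.1
      -- both ends in the same factor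
      · obtain ⟨j, hj⟩ := hother l₁.1
        obtain ⟨c, hc, -⟩ := hprop j 1
        set Minv := M.reverse.map (fun l => (⟨l.1, l.2⁻¹⟩ : Σ i, G i)) with hMinv
        have hbig := eq_nil_of_pprod_eq_one hφ
          (ll := (M ++ [⟨j, c⟩]) ++ (Minv ++ [⟨j, c⁻¹⟩])) ?_ ?_ ?_
        · rw [hM] at hbig
          simp at hbig
        · refine chain'_sandwich _ _ _ _ _ hMchain (hMinvchain M hMchain) ?_ ?_ ?_ ?_
          · rw [hMinv]
            simp [hMne2]
          · intro a ha
            rw [List.getLast?_eq_getLast hMne2] at ha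
            simp only [Option.mem_def, Option.some.injEq] at ha
            subst ha
            show lN.1 ≠ j
            rw [← hii]
            exact Ne.symm hj
          · intro b hb
            rw [hMinv, List.head?_map, List.head?_reverse,
              List.getLast?_eq_getLast hMne2] at hb
            simp only [Option.map_some, Option.mem_def, Option.some.injEq] at hb
            subst hb
            show j ≠ lN.1
            rw [← hii]
            exact hj
          · intro a ha
            rw [hMinv, List.getLast?_map, List.getLast?_reverse, hM] at ha
            simp only [List.head?_cons, Option.map_some, Option.mem_def,
              Option.some.injEq] at ha
            subst ha
            show l₁.1 ≠ j
            exact Ne.symm hj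
        · intro l hl
          simp only [List.mem_append, List.mem_cons, List.not_mem_nil, or_false] at hl
          rcases hl with (hl | rfl) | (hl | rfl)
          · exact hMletters l hl
          · exact hc
          · exact hMinvletters M hMletters l hl
          · exact fun hr => hc ((Subgroup.inv_mem_iff _).1 hr)
        · rw [pprod_append, pprod_append, pprod_append]
          simp only [pprod_cons, pprod_nil, mul_one, map_inv]
          rw [hMinv, pprod_invRev, hzM]
          have h := hcomm1 (PushoutI.of (φ := φ) j c)
          rw [← h]
          group
      -- ends in different factors: conjugate the inserted letter
      · obtain ⟨c, hc1, hc2⟩ := hprop lN.1 lN.2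
        set M'inv := M'.reverse.map (fun l => (⟨l.1, l.2⁻¹⟩ : Σ i, G i)) with hM'inv
        have hbig := eq_nil_of_pprod_eq_one hφ
          (ll := (M' ++ [⟨lN.1, lN.2 * c * lN.2⁻¹⟩]) ++ (M'inv ++ [⟨lN.1, c⁻¹⟩])) ?_ ?_ ?_
        · rw [hM'eq] at hbig
          simp at hbig
        · refine chain'_sandwich _ _ _ _ _ hchain2.1 (hMinvchain M' hchain2.1) ?_ ?_ ?_ ?_
          · rw [hM'inv]
            simp [hM'ne]
          · exact hchain2.2
          · intro b hb
            rw [hM'inv, List.head?_map, List.head?_reverse,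
              List.getLast?_eq_getLast hM'ne] at hb
            simp only [Option.map_some, Option.mem_def, Option.some.injEq] at hb
            subst hb
            have hx := hchain2.2 (M'.getLast hM'ne) (List.getLast?_eq_getLast hM'ne)
            show lN.1 ≠ (M'.getLast hM'ne).1
            exact fun h => hx h.symm
          · intro a ha
            rw [hM'inv, List.getLast?_map, List.getLast?_reverse, hM'head] at ha
            simp only [Option.map_some, Option.mem_def, Option.some.injEq] at ha
            subst ha
            show l₁.1 ≠ lN.1
            exact hii
        · intro l hl
          simp only [List.mem_append, List.mem_cons, List.not_mem_nil, or_false] at hl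
          rcases hl with (hl | rfl) | (hl | rfl)
          · exact hM'letters l hl
          · exact hc2
          · exact hMinvletters M' hM'letters l hl
          · exact fun hr => hc1 ((Subgroup.inv_mem_iff _).1 hr)
        · rw [pprod_append, pprod_append, pprod_append]
          simp only [pprod_cons, pprod_nil, mul_one, map_inv, map_mul]
          rw [hM'inv, pprod_invRev]
          have h := hcomm1 (PushoutI.of (φ := φ) lN.1 c)
          rw [← h, hzsplit]
          group

end Part4



/-- The genus-`g` surface relator `[a₁,b₁][a₂,b₂]⋯[a_g,b_g]` in the free group on
generators `a₁, b₁, …, a_g, b_g` (with `aᵢ = of (Sum.inl i)`, `bᵢ = of (Sum.inr i)`). -/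
def surfaceRelator (g : ℕ) : FreeGroup (Fin g ⊕ Fin g) :=
  (List.ofFn fun i : Fin g =>
    ⁅(FreeGroup.of (Sum.inl i) : FreeGroup (Fin g ⊕ Fin g)),
      FreeGroup.of (Sum.inr i)⁆).prod

/-- The genus-`g` surface group `Π_g`, presented on `a₁, b₁, …, a_g, b_g` with the
single relator `[a₁,b₁][a₂,b₂]⋯[a_g,b_g]`. -/
def SurfaceGroup (g : ℕ) : Type :=
  PresentedGroup ({surfaceRelator g} : Set (FreeGroup (Fin g ⊕ Fin g)))

instance (g : ℕ) : Group (SurfaceGroup g) :=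
  inferInstanceAs (Group (PresentedGroup _))



namespace Part5
open Monoid PushoutI Subgroup Function

variable (m : ℕ)

/-- which side of the amalgam a generator belongs to: `false` for the `0`th handle pair -/
def side (x : Fin (m+2) ⊕ Fin (m+2)) : Bool :=
  Sum.elim (fun i => decide (i.val ≠ 0)) (fun i => decide (i.val ≠ 0)) x

abbrev T (b : Bool) := {x : Fin (m+2) ⊕ Fin (m+2) // side m x = b}

abbrev Gb (b : Bool) := FreeGroup (T m b)

def a0 : T m false := ⟨Sum.inl 0, by simp [side]⟩
def b0 : T m false := ⟨Sum.inr 0, by simp [side]⟩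
def aS (i : Fin (m+1)) : T m true := ⟨Sum.inl i.succ, by simp [side]⟩
def bS (i : Fin (m+1)) : T m true := ⟨Sum.inr i.succ, by simp [side]⟩

def rA : Gb m false := ⁅FreeGroup.of (a0 m), FreeGroup.of (b0 m)⁆

def rB : Gb m true :=
  ((List.ofFn fun i : Fin (m+1) =>
    ⁅FreeGroup.of (aS m i), FreeGroup.of (bS m i)⁆).prod)⁻¹

/-- the chosen relator element on each side -/
def r : ∀ b : Bool, Gb m b
  | false => rA m
  | true => rB m

/-- the amalgamating maps from `FreeGroup Unit ≅ ℤ` -/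
def φg : ∀ b : Bool, FreeGroup Unit →* Gb m b := fun b => FreeGroup.lift fun _ => r m b

theorem exists_zpow (x : FreeGroup Unit) : ∃ k : ℤ, x = FreeGroup.of () ^ k := by
  have h1 : (Set.range (FreeGroup.of : Unit → FreeGroup Unit)) = {FreeGroup.of ()} := by
    ext w
    simp only [Set.mem_range, Set.mem_singleton_iff]
    constructor
    · rintro ⟨⟨⟩, rfl⟩; rfl
    · rintro rfl; exact ⟨(), rfl⟩
  have h2 : x ∈ Subgroup.zpowers (FreeGroup.of ()) := by
    rw [Subgroup.zpowers_eq_closure, ← h1, FreeGroup.closure_range_of]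
    trivial
  obtain ⟨k, hk⟩ := Subgroup.mem_zpowers_iff.1 h2
  exact ⟨k, hk.symm⟩

theorem a0_ne_b0 : a0 m ≠ b0 m := by
  intro h
  simpa [a0, b0] using congrArg Subtype.val h

theorem aS_ne_bS (i : Fin (m+1)) : aS m i ≠ bS m i := by
  intro h
  simpa [aS, bS] using congrArg Subtype.val h

/-- retraction onto the 1st handle pair, used to show `rB` has infinite order -/
def ψ : Gb m true →* FreeGroup Bool :=
  FreeGroup.lift fun t =>
    Sum.elim (fun i : Fin (m+2) => if i.val = 1 then FreeGroup.of false else 1)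
      (fun i : Fin (m+2) => if i.val = 1 then FreeGroup.of true else 1) t.val

theorem ψ_rB : ψ m (rB m) = ⁅FreeGroup.of false, FreeGroup.of true⁆⁻¹ := by
  rw [rB, map_inv, map_list_prod, List.map_ofFn]
  congr 1
  have : ((fun x => ψ m x) ∘ fun i : Fin (m+1) =>
      ⁅FreeGroup.of (aS m i), FreeGroup.of (bS m i)⁆) =
      fun i : Fin (m+1) => ⁅ψ m (FreeGroup.of (aS m i)), ψ m (FreeGroup.of (bS m i))⁆ := by
    funext i; simp [map_commutatorElement]
  rw [this, List.ofFn_succ]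
  have h0 : ⁅ψ m (FreeGroup.of (aS m 0)), ψ m (FreeGroup.of (bS m 0))⁆ =
      ⁅FreeGroup.of false, FreeGroup.of true⁆ := by
    simp [ψ, aS, bS, FreeGroup.lift_apply_of]
  rw [List.prod_cons, h0]
  have h1 : ∀ x ∈ (List.ofFn fun i : Fin m =>
      ⁅ψ m (FreeGroup.of (aS m i.succ)), ψ m (FreeGroup.of (bS m i.succ))⁆), x = 1 := by
    intro x hx
    rw [List.mem_ofFn] at hx
    obtain ⟨i, rfl⟩ := hx
    have ha : ψ m (FreeGroup.of (aS m i.succ)) = 1 := by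
      simp [ψ, aS, FreeGroup.lift_apply_of, Fin.val_succ]
    have hb : ψ m (FreeGroup.of (bS m i.succ)) = 1 := by
      simp [ψ, bS, FreeGroup.lift_apply_of, Fin.val_succ]
    show ⁅ψ m (FreeGroup.of (aS m i.succ)), ψ m (FreeGroup.of (bS m i.succ))⁆ = 1
    rw [ha, hb]
    simp
  rw [List.prod_eq_one h1, mul_one]

theorem r_zpow_eq_one (b : Bool) {k : ℤ} (h : r m b ^ k = 1) : k = 0 := by
  by_contra hk
  cases b with
  | false =>
    exact Part2.commutator_zpow_ne_one (a0_ne_b0 m) hk h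
  | true =>
    have := congrArg (ψ m) h
    have hr' : r m true = rB m := rfl
    rw [hr', map_zpow, map_one, ψ_rB] at this
    rw [inv_zpow, ← zpow_neg] at this
    exact Part2.commutator_zpow_ne_one (show (false : Bool) ≠ true by simp)
      (show -k ≠ 0 by omega) this

theorem φg_injective (b : Bool) : Function.Injective (φg m b) := by
  intro x y hxy
  obtain ⟨k, rfl⟩ := exists_zpow x
  obtain ⟨l, rfl⟩ := exists_zpow y
  have hφof : ∀ n : ℤ, φg m b (FreeGroup.of () ^ n) = r m b ^ n := by
    intro n
    rw [map_zpow, φg, FreeGroup.lift_apply_of]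
  rw [hφof, hφof] at hxy
  have : r m b ^ (k - l) = 1 := by
    rw [zpow_sub, hxy, mul_inv_cancel]
  have := r_zpow_eq_one m b this
  have : k = l := by omega
  rw [this]

/-- exponent-sum homomorphism, killing the relators -/
def χ (b : Bool) : Gb m b →* Multiplicative ℤ :=
  FreeGroup.lift fun _ => Multiplicative.ofAdd 1

theorem χ_r (b : Bool) : χ m b (r m b) = 1 := by
  cases b with
  | false =>
    rw [r, rA, map_commutatorElement]
    exact commutatorElement_eq_one_iff_commute.2 (mul_comm _ _)
  | true =>
    rw [r, rB, map_inv, map_list_prod, List.map_ofFn, inv_eq_one]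
    apply List.prod_eq_one
    intro x hx
    rw [List.mem_ofFn] at hx
    obtain ⟨i, rfl⟩ := hx
    simp only [Function.comp_apply, map_commutatorElement]
    exact commutatorElement_eq_one_iff_commute.2 (mul_comm _ _)

theorem χ_range (b : Bool) {p : Gb m b} (hp : p ∈ (φg m b).range) : χ m b p = 1 := by
  obtain ⟨h, rfl⟩ := hp
  obtain ⟨k, rfl⟩ := exists_zpow h
  rw [map_zpow, φg, FreeGroup.lift_apply_of, map_zpow, χ_r, one_zpow]

theorem hprop (b : Bool) (u : Gb m b) :
    ∃ c, c ∉ (φg m b).range ∧ u * c * u⁻¹ ∉ (φg m b).range := by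
  refine ⟨FreeGroup.of (Bool.rec (a0 m) (aS m 0) b), ?_, ?_⟩
  · intro hr
    have := χ_range m b hr
    rw [χ, FreeGroup.lift_apply_of] at this
    exact absurd this (by decide)
  · intro hr
    have := χ_range m b hr
    rw [map_mul, map_mul, map_inv] at this
    rw [mul_comm ((χ m b) u), mul_assoc, mul_inv_cancel, mul_one] at this
    rw [χ, FreeGroup.lift_apply_of] at this
    exact absurd this (by decide)

theorem center_Gb (b : Bool) : Subgroup.center (Gb m b) = ⊥ := by
  cases b with
  | false => exact Part3.center_eq_bot (a0_ne_b0 m)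
  | true => exact Part3.center_eq_bot (aS_ne_bS m 0)

theorem center_pushout : Subgroup.center (PushoutI (φg m)) = ⊥ := by
  apply Part4.center_eq_bot (φg_injective m) (center_Gb m) (hprop m)
  intro b
  exact ⟨!b, by cases b <;> simp⟩

end Part5

namespace Part6
open Monoid PushoutI Subgroup Function Part5

variable (m : ℕ)

abbrev rels : Set (FreeGroup (Fin (m+2) ⊕ Fin (m+2))) := {surfaceRelator (m+2)}

abbrev SG := PresentedGroup (rels m)

/-- generator images in the pushout -/
def fgen (x : Fin (m+2) ⊕ Fin (m+2)) : PushoutI (φg m) :=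
  PushoutI.of (φ := φg m) (side m x) (FreeGroup.of ⟨x, rfl⟩)

theorem fgen_eq (x : Fin (m+2) ⊕ Fin (m+2)) (b : Bool) (h : side m x = b) :
    fgen m x = PushoutI.of (φ := φg m) b (FreeGroup.of ⟨x, h⟩) := by
  subst h
  rfl

theorem side_inl_zero : side m (Sum.inl 0) = false := by simp [side]
theorem side_inr_zero : side m (Sum.inr 0) = false := by simp [side]
theorem side_inl_succ (i : Fin (m+1)) : side m (Sum.inl i.succ) = true := by simp [side]
theorem side_inr_succ (i : Fin (m+1)) : side m (Sum.inr i.succ) = true := by simp [side]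

theorem lift_fgen_relator : FreeGroup.lift (fgen m) (surfaceRelator (m+2)) = 1 := by
  rw [surfaceRelator, map_list_prod, List.map_ofFn]
  have h1 : ((fun x => FreeGroup.lift (fgen m) x) ∘ fun i : Fin (m+2) =>
      ⁅(FreeGroup.of (Sum.inl i) : FreeGroup (Fin (m+2) ⊕ Fin (m+2))), FreeGroup.of (Sum.inr i)⁆) =
      fun i : Fin (m+2) => ⁅fgen m (Sum.inl i), fgen m (Sum.inr i)⁆ := by
    funext i
    simp [map_commutatorElement]
  rw [h1, List.ofFn_succ, List.prod_cons]
  have h2 : ⁅fgen m (Sum.inl (0 : Fin (m+2))), fgen m (Sum.inr 0)⁆ =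
      PushoutI.of (φ := φg m) false (rA m) := by
    rw [fgen_eq m _ false (side_inl_zero m), fgen_eq m _ false (side_inr_zero m),
      ← map_commutatorElement]
    rfl
  have h3 : (List.ofFn fun i : Fin (m+1) =>
      ⁅fgen m (Sum.inl (Fin.succ i)), fgen m (Sum.inr (Fin.succ i))⁆).prod =
      PushoutI.of (φ := φg m) true ((rB m)⁻¹) := by
    have h4 : (List.ofFn fun i : Fin (m+1) =>
        ⁅fgen m (Sum.inl (Fin.succ i)), fgen m (Sum.inr (Fin.succ i))⁆) =
        (List.ofFn fun i : Fin (m+1) =>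
          PushoutI.of (φ := φg m) true ⁅FreeGroup.of (aS m i), FreeGroup.of (bS m i)⁆) := by
      congr 1
      funext i
      rw [fgen_eq m _ true (side_inl_succ m i), fgen_eq m _ true (side_inr_succ m i),
        ← map_commutatorElement]
      rfl
    have h4' : (List.ofFn fun i : Fin (m+1) =>
        PushoutI.of (φ := φg m) true ⁅FreeGroup.of (aS m i), FreeGroup.of (bS m i)⁆) =
        List.map (PushoutI.of (φ := φg m) true) (List.ofFn fun i : Fin (m+1) =>
          ⁅FreeGroup.of (aS m i), FreeGroup.of (bS m i)⁆) := by
      rw [List.map_ofFn]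
      rfl
    rw [h4, h4', ← map_list_prod, rB, inv_inv]
  rw [h2, h3]
  have h5 : ∀ b : Bool, PushoutI.of (φ := φg m) b (r m b) =
      PushoutI.base (φg m) (FreeGroup.of ()) := by
    intro b
    rw [show r m b = φg m b (FreeGroup.of ()) by rw [φg, FreeGroup.lift_apply_of]]
    exact of_apply_eq_base (φg m) b (FreeGroup.of ())
  have h6 : PushoutI.of (φ := φg m) false (rA m) = PushoutI.base (φg m) (FreeGroup.of ()) := by
    have := h5 false
    rwa [show r m false = rA m from rfl] at this
  have h7 : PushoutI.of (φ := φg m) true ((rB m)⁻¹) =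
      (PushoutI.base (φg m) (FreeGroup.of ()))⁻¹ := by
    have := h5 true
    rw [show r m true = rB m from rfl] at this
    rw [map_inv, this]
  rw [h6, h7, mul_inv_cancel]

theorem relator_mem : ∀ rl ∈ rels m, FreeGroup.lift (fgen m) rl = 1 := by
  rintro rl hrl
  rw [Set.mem_singleton_iff] at hrl
  subst hrl
  exact lift_fgen_relator m

/-- hom from the surface group to the pushout -/
def Θ : SG m →* PushoutI (φg m) := PresentedGroup.toGroup (relator_mem m)

def cA : SG m :=
  ⁅(PresentedGroup.of (Sum.inl 0) : SG m), (PresentedGroup.of (Sum.inr 0) : SG m)⁆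

def fb (b : Bool) : Gb m b →* SG m :=
  FreeGroup.lift fun t => (PresentedGroup.of t.val : SG m)

def kk : FreeGroup Unit →* SG m := FreeGroup.lift fun _ => cA m

/-- the image of the surface relator in the presented group is trivial -/
theorem relator_image :
    cA m * (List.ofFn fun i : Fin (m+1) =>
      ⁅(PresentedGroup.of (Sum.inl i.succ) : SG m), PresentedGroup.of (Sum.inr i.succ)⁆).prod
      = 1 := by
  have hmem : surfaceRelator (m+2) ∈ Subgroup.normalClosure (rels m) :=
    Subgroup.subset_normalClosure rfl
  have h0 : (QuotientGroup.mk' (Subgroup.normalClosure (rels m))) (surfaceRelator (m+2)) = 1 := by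
    rw [QuotientGroup.mk'_apply, QuotientGroup.eq_one_iff]
    exact hmem
  rw [surfaceRelator, map_list_prod, List.map_ofFn] at h0
  have h1 : ((fun x => (QuotientGroup.mk' (Subgroup.normalClosure (rels m))) x) ∘
      fun i : Fin (m+2) =>
      ⁅(FreeGroup.of (Sum.inl i) : FreeGroup (Fin (m+2) ⊕ Fin (m+2))), FreeGroup.of (Sum.inr i)⁆) =
      fun i : Fin (m+2) =>
        ⁅(PresentedGroup.of (Sum.inl i) : SG m), PresentedGroup.of (Sum.inr i)⁆ := by
    funext i
    simp only [Function.comp_apply, map_commutatorElement]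
    rfl
  rw [h1] at h0
  have h0' : (List.ofFn fun i : Fin (m+2) =>
      ⁅(PresentedGroup.of (Sum.inl i) : SG m), PresentedGroup.of (Sum.inr i)⁆).prod = 1 := h0
  rw [List.ofFn_succ, List.prod_cons] at h0'
  unfold cA
  exact h0'

theorem fb_comp (b : Bool) : (fb m b).comp (φg m b) = kk m := by
  apply FreeGroup.ext_hom
  rintro ⟨⟩
  rw [MonoidHom.comp_apply, φg, FreeGroup.lift_apply_of, kk, FreeGroup.lift_apply_of]
  cases b with
  | false =>
    show fb m false (rA m) = cA m
    rw [rA, map_commutatorElement, fb, FreeGroup.lift_apply_of, FreeGroup.lift_apply_of]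
    unfold cA
    rfl
  | true =>
    show fb m true (rB m) = cA m
    rw [rB, map_inv, map_list_prod, List.map_ofFn]
    have h1 : ((fun x => fb m true x) ∘ fun i : Fin (m+1) =>
        ⁅FreeGroup.of (aS m i), FreeGroup.of (bS m i)⁆) =
        fun i : Fin (m+1) =>
          ⁅(PresentedGroup.of (Sum.inl i.succ) : SG m), PresentedGroup.of (Sum.inr i.succ)⁆ := by
      funext i
      simp only [Function.comp_apply, map_commutatorElement, fb, FreeGroup.lift_apply_of]
      rfl
    rw [h1]
    exact inv_eq_of_mul_eq_one_left (relator_image m)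

/-- hom from the pushout to the surface group -/
def Λ : PushoutI (φg m) →* SG m := PushoutI.lift (fb m) (kk m) (fb_comp m)

theorem ΛΘ : (Λ m).comp (Θ m) = MonoidHom.id (SG m) := by
  apply PresentedGroup.ext
  intro x
  simp only [MonoidHom.comp_apply, MonoidHom.id_apply]
  rw [Θ, PresentedGroup.toGroup.of]
  rw [fgen, Λ, PushoutI.lift_of, fb, FreeGroup.lift_apply_of]

theorem ΘΛ : (Θ m).comp (Λ m) = MonoidHom.id (PushoutI (φg m)) := by
  apply PushoutI.hom_ext_nonempty
  intro b
  apply FreeGroup.ext_hom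
  intro t
  simp only [MonoidHom.comp_apply, MonoidHom.id_apply]
  rw [Λ, PushoutI.lift_of, fb, FreeGroup.lift_apply_of, Θ, PresentedGroup.toGroup.of]
  rw [fgen_eq m t.val b t.prop]

def e : SG m ≃* PushoutI (φg m) := MonoidHom.toMulEquiv (Θ m) (Λ m) (ΛΘ m) (ΘΛ m)

theorem center_SG : Subgroup.center (SG m) = ⊥ := by
  rw [eq_bot_iff]
  intro z hz
  rw [Subgroup.mem_center_iff] at hz
  rw [Subgroup.mem_bot]
  have hc : e m z ∈ Subgroup.center (PushoutI (φg m)) := by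
    rw [Subgroup.mem_center_iff]
    intro w
    have : w = e m ((e m).symm w) := ((e m).apply_symm_apply w).symm
    rw [this, ← map_mul, ← map_mul, hz]
  rw [center_pushout m, Subgroup.mem_bot] at hc
  have := congrArg (e m).symm hc
  rwa [(e m).symm_apply_apply, map_one] at this

end Part6


/-- For `g ≥ 2`, the genus-`g` surface group has trivial center. -/
theorem center_surfaceGroup_eq_bot (g : ℕ) (hg : 2 ≤ g) :
    Subgroup.center (SurfaceGroup g) = ⊥ := by
  obtain ⟨m, rfl⟩ : ∃ m, g = m + 2 := ⟨g - 2, by omega⟩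
  exact Part6.center_SG m
end
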